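/- Suppose (x*, y*) is a Nash equilibrium of the constrained bimatrix game, i.e., x* maximizes xᵀA y* over X̂ and y* maximizes x*ᵀB y over Ŷ. Then there exist scalars u ≥ 0 and α ∈ ℝ such that: A y* - u·r - α·1 ≤ 0 (componentwise), x*ᵀA y* - u·r_ave - α = 0, and u·(rᵀx* - r_ave) = 0. -/

import Mathlib

open Finset

/-- KKT necessity (Theorem 2, player one direction): if (x*, y*) is a Nash equilibrium of the
constrained bimatrix game, then there exist multipliers u ≥ 0, α ∈ ℝ satisfying
A y* - u r - α 1 ≤ 0, x*ᵀA y* - u r_ave - α = 0 and u (rᵀx* - r_ave) = 0. -/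
theorem kkt_necessity_player_one (m n : ℕ) (hm : 0 < m) (hn : 0 < n)
    (A B : Matrix (Fin m) (Fin n) ℝ)
    (r : Fin m → ℝ) (rave : ℝ) (j : Fin n → ℝ) (jave : ℝ)
    (hrave : (Finset.univ.inf' (Finset.univ_nonempty_iff.mpr ⟨⟨0, hm⟩⟩) r) ≤ rave)
    (Xhat : Set (Fin m → ℝ)) (Yhat : Set (Fin n → ℝ))
    (hX : Xhat = {x | (∀ i, 0 ≤ x i) ∧ (∑ i, x i = 1) ∧ (∑ i, r i * x i ≤ rave)})
    (hY : Yhat = {y | (∀ k, 0 ≤ y k) ∧ (∑ k, y k = 1) ∧ (∑ k, j k * y k ≤ jave)})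
    (xs : Fin m → ℝ) (ys : Fin n → ℝ) (hxs : xs ∈ Xhat) (hys : ys ∈ Yhat)
    (hNE1 : ∀ x ∈ Xhat, ∑ i, ∑ k, x i * A i k * ys k ≤ ∑ i, ∑ k, xs i * A i k * ys k)
    (hNE2 : ∀ y ∈ Yhat, ∑ i, ∑ k, xs i * B i k * y k ≤ ∑ i, ∑ k, xs i * B i k * ys k) :
    ∃ u α : ℝ, 0 ≤ u ∧
      (∀ i, ∑ k, A i k * ys k - u * r i - α ≤ 0) ∧
      ((∑ i, ∑ k, xs i * A i k * ys k) - u * rave - α = 0) ∧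
      (u * ((∑ i, r i * xs i) - rave) = 0) := by
  classical
  subst hX hY
  obtain ⟨hxs0, hxs1, hxsr⟩ := hxs
  -- value vector and optimal value, made opaque
  obtain ⟨c, hc⟩ : ∃ c : Fin m → ℝ, ∀ i, c i = ∑ k, A i k * ys k :=
    ⟨fun i => ∑ k, A i k * ys k, fun _ => rfl⟩
  obtain ⟨v, hv⟩ : ∃ v : ℝ, v = ∑ i, xs i * c i := ⟨_, rfl⟩
  have hvv : ∑ i, ∑ k, xs i * A i k * ys k = v := by
    rw [hv]
    refine Finset.sum_congr rfl (fun i _ => ?_)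
    rw [hc i, Finset.mul_sum]
    exact Finset.sum_congr rfl (fun k _ => by ring)
  have key : ∀ x : Fin m → ℝ, (∀ i, 0 ≤ x i) → (∑ i, x i = 1) → (∑ i, r i * x i ≤ rave) →
      ∑ i, c i * x i ≤ v := by
    intro x h0 h1 h2
    have hle := hNE1 x ⟨h0, h1, h2⟩
    calc ∑ i, c i * x i = ∑ i, ∑ k, x i * A i k * ys k := by
          refine Finset.sum_congr rfl (fun i _ => ?_)
          rw [hc i, Finset.sum_mul]
          exact Finset.sum_congr rfl (fun k _ => by ring)
      _ ≤ ∑ i, ∑ k, xs i * A i k * ys k := hle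
      _ = v := hvv
  clear hNE1 hNE2 hys hrave
  -- helper: sums against xs plus a single indicator
  have expand1 : ∀ (g : Fin m → ℝ) (a b : ℝ) (i : Fin m),
      ∑ j, g j * (a * xs j + b * (if j = i then 1 else 0))
        = a * (∑ j, g j * xs j) + b * g i := by
    intro g a b i
    have h : ∀ j, g j * (a * xs j + b * (if j = i then 1 else 0))
        = a * (g j * xs j) + b * (if j = i then g j else 0) := by
      intro j; split <;> ring
    simp only [h, Finset.sum_add_distrib, ← Finset.mul_sum, Finset.sum_ite_eq',
      Finset.mem_univ, if_true]
  -- helper: sums against two indicators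
  have expand2 : ∀ (g : Fin m → ℝ) (a b : ℝ) (i i₀ : Fin m), i ≠ i₀ →
      ∑ j, g j * (a * (if j = i then 1 else 0) + b * (if j = i₀ then 1 else 0))
        = a * g i + b * g i₀ := by
    intro g a b i i₀ hne
    have h : ∀ jj, g jj * (a * (if jj = i then 1 else 0) + b * (if jj = i₀ then 1 else 0))
        = a * (if jj = i then g jj else 0) + b * (if jj = i₀ then g jj else 0) := by
      intro jj
      by_cases h1 : jj = i
      · by_cases h2 : jj = i₀
        · exact absurd (h1.symm.trans h2) hne
        · rw [if_pos h1, if_neg h2, if_pos h1, if_neg h2]; ring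
      · by_cases h2 : jj = i₀
        · rw [if_neg h1, if_pos h2, if_neg h1, if_pos h2]; ring
        · rw [if_neg h1, if_neg h2, if_neg h1, if_neg h2]; ring
    simp only [h, Finset.sum_add_distrib, ← Finset.mul_sum, Finset.sum_ite_eq',
      Finset.mem_univ, if_true]
  -- single point lemma
  have single : ∀ i : Fin m, r i ≤ rave → c i ≤ v := by
    intro i hi
    have h0 : ∀ jj, (0:ℝ) ≤ (0 * xs jj + 1 * (if jj = i then 1 else 0)) := by
      intro jj; split <;> norm_num
    have h1 : ∑ jj, ((0:ℝ) * xs jj + 1 * (if jj = (i:Fin m) then (1:ℝ) else 0)) = 1 := by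
      have h := expand1 (fun _ => (1:ℝ)) 0 1 i
      simp only [one_mul, mul_one] at h ⊢
      rw [h]; ring
    have h2 : ∑ jj, r jj * ((0:ℝ) * xs jj + 1 * (if jj = i then 1 else 0)) ≤ rave := by
      rw [expand1 r 0 1 i]; linarith
    have hk := key _ h0 h1 h2
    rw [expand1 c 0 1 i] at hk
    linarith
  obtain ⟨r0, hr0⟩ : ∃ r0 : ℝ, r0 = ∑ i, r i * xs i := ⟨_, rfl⟩
  rw [← hr0] at hxsr
  -- slack lemma
  have slack : r0 < rave → ∀ i, c i ≤ v := by
    intro hlt i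
    obtain ⟨δ, hδ⟩ : ∃ δ : ℝ, δ = rave - r0 := ⟨_, rfl⟩
    have hδ0 : 0 < δ := by rw [hδ]; linarith
    have hden : 0 < |r i - r0| + δ := by positivity
    obtain ⟨t, ht⟩ : ∃ t : ℝ, t = δ / (|r i - r0| + δ) := ⟨_, rfl⟩
    have ht0 : 0 < t := by rw [ht]; positivity
    have ht1 : t ≤ 1 := by
      rw [ht, div_le_one hden]
      have := abs_nonneg (r i - r0); linarith
    have htm : t * (|r i - r0| + δ) = δ := by
      rw [ht, div_mul_cancel₀ _ hden.ne']
    have h0 : ∀ jj, (0:ℝ) ≤ ((1 - t) * xs jj + t * (if jj = i then 1 else 0)) := by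
      intro jj
      have hxj := hxs0 jj
      have h1 : (0:ℝ) ≤ (1 - t) * xs jj := mul_nonneg (by linarith) hxj
      have h2 : (0:ℝ) ≤ t * (if jj = i then (1:ℝ) else 0) := by
        split <;> linarith
      linarith
    have h1 : ∑ jj, ((1 - t) * xs jj + t * (if jj = (i:Fin m) then (1:ℝ) else 0)) = 1 := by
      have h := expand1 (fun _ => (1:ℝ)) (1 - t) t i
      simp only [one_mul, mul_one] at h ⊢
      rw [h, hxs1]; ring
    have h2 : ∑ jj, r jj * ((1 - t) * xs jj + t * (if jj = i then 1 else 0)) ≤ rave := by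
      rw [expand1 r (1 - t) t i, ← hr0]
      have habs : r i - r0 ≤ |r i - r0| := le_abs_self _
      have habs0 : 0 ≤ |r i - r0| := abs_nonneg _
      nlinarith
    have hk := key _ h0 h1 h2
    rw [expand1 c (1 - t) t i] at hk
    rw [hv] at hk
    have hvc : ∑ jj, c jj * xs jj = ∑ jj, xs jj * c jj :=
      Finset.sum_congr rfl (fun jj _ => mul_comm _ _)
    rw [hvc] at hk
    rw [hv]
    nlinarith
  clear hxs0 hxs1
  -- the multiplier
  by_cases hS : (Finset.univ.filter (fun i => rave < r i)).Nonempty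
  · obtain ⟨s, hs⟩ : ∃ s : ℝ,
        s = (Finset.univ.filter (fun i => rave < r i)).sup' hS
          (fun i => (c i - v) / (r i - rave)) := ⟨_, rfl⟩
    obtain ⟨u, hu⟩ : ∃ u : ℝ, u = max 0 s := ⟨_, rfl⟩
    have hu0 : 0 ≤ u := hu ▸ le_max_left 0 s
    refine ⟨u, v - u * rave, hu0, ?_, by rw [hvv]; ring, ?_⟩
    · -- main inequality
      intro i
      rw [← hc i]
      have hri : ∀ i₁, rave < r i₁ → c i₁ - v ≤ u * (r i₁ - rave) := by
        intro i₁ hgt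
        have hmem : i₁ ∈ Finset.univ.filter (fun i => rave < r i) :=
          Finset.mem_filter.mpr ⟨Finset.mem_univ i₁, hgt⟩
        have hle : (c i₁ - v) / (r i₁ - rave) ≤ s := by
          rw [hs]
          exact Finset.le_sup' (fun i => (c i - v) / (r i - rave)) hmem
        have hle2 : (c i₁ - v) / (r i₁ - rave) ≤ u :=
          le_trans hle (hu ▸ le_max_right 0 s)
        have := (div_le_iff₀ (by linarith : (0:ℝ) < r i₁ - rave)).mp hle2
        linarith
      rcases lt_trichotomy (r i) rave with hlt | heq | hgt
      · -- r i < rave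
        by_cases hu' : u = 0
        · have := single i hlt.le
          rw [hu']
          linarith
        · have hupos : 0 < u := lt_of_le_of_ne hu0 (Ne.symm hu')
          have hsu : s = u := by
            rcases max_choice 0 s with h1 | h1
            · exfalso; rw [hu, h1] at hupos; exact lt_irrefl 0 hupos
            · rw [hu, h1]
          obtain ⟨i₀, hi₀S, hi₀⟩ := Finset.exists_mem_eq_sup' hS
            (fun i => (c i - v) / (r i - rave))
          have hri₀ : rave < r i₀ := (Finset.mem_filter.mp hi₀S).2
          obtain ⟨d, hd⟩ : ∃ d : ℝ, d = r i₀ - rave := ⟨_, rfl⟩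
          obtain ⟨e, he⟩ : ∃ e : ℝ, e = rave - r i := ⟨_, rfl⟩
          have hd0 : 0 < d := by rw [hd]; linarith
          have he0 : 0 < e := by rw [he]; linarith
          have hde : 0 < d + e := by linarith
          have hud : u * d = c i₀ - v := by
            have hux : u = (c i₀ - v) / (r i₀ - rave) := by rw [← hsu, hs, hi₀]
            rw [hux, hd]
            exact div_mul_cancel₀ _ (by linarith : r i₀ - rave ≠ 0)
          have hne : i ≠ i₀ := fun h => by rw [h] at hlt; linarith
          have ha0 : (0:ℝ) ≤ d / (d + e) := div_nonneg hd0.le hde.le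
          have hb0 : (0:ℝ) ≤ e / (d + e) := div_nonneg he0.le hde.le
          have h0 : ∀ jj, (0:ℝ) ≤ (d / (d + e) * (if jj = i then 1 else 0)
              + e / (d + e) * (if jj = i₀ then 1 else 0)) := by
            intro jj
            have g1 : (0:ℝ) ≤ d / (d + e) * (if jj = i then (1:ℝ) else 0) := by
              split <;> linarith
            have g2 : (0:ℝ) ≤ e / (d + e) * (if jj = i₀ then (1:ℝ) else 0) := by
              split <;> linarith
            linarith
          have h1 : ∑ jj, (d / (d + e) * (if jj = (i:Fin m) then (1:ℝ) else 0)
              + e / (d + e) * (if jj = i₀ then 1 else 0)) = 1 := by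
            have h := expand2 (fun _ => (1:ℝ)) (d / (d + e)) (e / (d + e)) i i₀ hne
            simp only [one_mul, mul_one] at h ⊢
            rw [h, ← add_div, div_self hde.ne']
          have h2 : ∑ jj, r jj * (d / (d + e) * (if jj = i then 1 else 0)
              + e / (d + e) * (if jj = i₀ then 1 else 0)) ≤ rave := by
            rw [expand2 r (d / (d + e)) (e / (d + e)) i i₀ hne]
            have hcomb : d / (d + e) * r i + e / (d + e) * r i₀ = rave := by
              rw [div_mul_eq_mul_div, div_mul_eq_mul_div, ← add_div,
                div_eq_iff hde.ne', hd, he]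
              ring
            linarith
          have hk := key _ h0 h1 h2
          rw [expand2 c (d / (d + e)) (e / (d + e)) i i₀ hne] at hk
          have hk' : d * c i + e * c i₀ ≤ v * (d + e) := by
            rw [div_mul_eq_mul_div, div_mul_eq_mul_div, ← add_div,
              div_le_iff₀ hde] at hk
            linarith
          have hgoal : c i ≤ v - u * e := by nlinarith
          rw [he] at hgoal
          linarith
      · -- r i = rave
        have := single i heq.le
        rw [heq]
        linarith
      · -- rave < r i
        have := hri i hgt
        linarith
    · -- complementary slackness
      rw [← hr0]
      rcases eq_or_lt_of_le hxsr with heq | hlt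
      · rw [heq]; ring
      · have hs0 : s ≤ 0 := by
          rw [hs]
          apply Finset.sup'_le
          intro i hi
          have hgt : rave < r i := (Finset.mem_filter.mp hi).2
          have := slack hlt i
          exact div_nonpos_of_nonpos_of_nonneg (by linarith) (by linarith)
        have hu0' : u = 0 := by rw [hu]; exact max_eq_left hs0
        rw [hu0']; ring
  · -- no index exceeds rave
    refine ⟨0, v, le_refl 0, ?_, by rw [hvv]; ring, by ring⟩
    intro i
    rw [← hc i]
    have hri : r i ≤ rave := by
      by_contra h
      exact hS ⟨i, Finset.mem_filter.mpr ⟨Finset.mem_univ i, lt_of_not_ge h⟩⟩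
    have := single i hri
    linarith
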